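/- Let H be a real Hilbert space and (f_j)_{j∈ℕ} a Hilbert basis (complete orthonormal family) of H. Let (e_j)_{j∈ℕ} be a family of vectors in H and C* > 0 a constant such that ‖e_0 − f_0‖ ≤ C*, and for every integer j ≥ 1, ‖e_{2j} − f_{2j}‖ ≤ C*/j and ‖e_{2j−1} − f_{2j−1}‖ ≤ C*/j. Assume C*·√(1 + π²/3) < 1. Then the map L : H → H defined by L(v) = Σ_{j=0}^∞ ⟨f_j, v⟩ e_j (the series converging in H for every v) is a well-defined bounded linear operator satisfying ‖L − Id‖ ≤ C*·√(1 + π²/3) < 1; in particular L is a bounded invertible operator (a continuous linear equivalence of H onto itself). -/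

import Mathlib

open scoped RealInnerProductSpace

set_option maxHeartbeats 2000000 in
/-- Abstract core of Proposition 7.1: if the family `(e_j)` satisfies `‖e_0 − f_0‖ ≤ C*`,
`‖e_{2j} − f_{2j}‖ ≤ C*/j` and `‖e_{2j−1} − f_{2j−1}‖ ≤ C*/j` for `j ≥ 1`, with
`C*·√(1+π²/3) < 1`, then `L v = ∑ ⟪f_j, v⟫ e_j` defines a bounded operator with
`‖L − Id‖ ≤ C*·√(1+π²/3) < 1`; in particular `L` is a bounded invertible operator. -/
theorem stmt0 {H : Type*} [NormedAddCommGroup H] [InnerProductSpace ℝ H] [CompleteSpace H]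
    (f : HilbertBasis ℕ ℝ H) (e : ℕ → H) (Cs : ℝ) (hCs : 0 < Cs)
    (h0 : ‖e 0 - f 0‖ ≤ Cs)
    (heven : ∀ j : ℕ, 1 ≤ j → ‖e (2 * j) - f (2 * j)‖ ≤ Cs / j)
    (hodd : ∀ j : ℕ, 1 ≤ j → ‖e (2 * j - 1) - f (2 * j - 1)‖ ≤ Cs / j)
    (hsmall : Cs * Real.sqrt (1 + Real.pi ^ 2 / 3) < 1) :
    ∃ L : H →L[ℝ] H,
      (∀ v : H, HasSum (fun j : ℕ => ⟪(f j : H), v⟫ • e j) (L v)) ∧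
      ‖L - ContinuousLinearMap.id ℝ H‖ ≤ Cs * Real.sqrt (1 + Real.pi ^ 2 / 3) ∧
      ∃ L' : H ≃L[ℝ] H, (L' : H →L[ℝ] H) = L := by
  set S := Cs * Real.sqrt (1 + Real.pi ^ 2 / 3) with hSdef
  have hπ : (0:ℝ) ≤ 1 + Real.pi ^ 2 / 3 := by positivity
  have hS0 : 0 ≤ S := by positivity
  set d : ℕ → H := fun j => e j - f j with hd
  set A : ℝ := Cs ^ 2 * (1 + Real.pi ^ 2 / 3) with hA
  have hSA : Real.sqrt A = S := by
    rw [hA, hSdef, Real.sqrt_mul (sq_nonneg Cs), Real.sqrt_sq hCs.le]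
  -- the comparison sequence
  set g : ℕ → ℝ := fun n => (if n = 0 then Cs else Cs / (((n+1)/2 : ℕ) : ℝ)) ^ 2 with hg
  have basel : HasSum (fun n : ℕ => (Cs / (n : ℕ)) ^ 2) (Cs ^ 2 * (Real.pi ^ 2 / 6)) := by
    have := hasSum_zeta_two.mul_left (Cs ^ 2)
    convert this using 2 with n
    · rfl
    rcases Nat.eq_zero_or_pos n with h | h
    · simp [h]
    · ring
  have basel' : HasSum (fun n : ℕ => (Cs / ((n + 1 : ℕ) : ℝ)) ^ 2) (Cs ^ 2 * (Real.pi ^ 2 / 6)) := by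
    have h : HasSum (fun n : ℕ => (Cs / (n : ℕ)) ^ 2)
        (Cs ^ 2 * (Real.pi ^ 2 / 6) + ∑ i ∈ Finset.range 1, (Cs / (i : ℕ)) ^ 2) := by
      simpa using basel
    exact (hasSum_nat_add_iff 1).mpr h
  have heven_sum : HasSum (fun k : ℕ => g (2 * k)) (Cs ^ 2 + Cs ^ 2 * (Real.pi ^ 2 / 6)) := by
    have h1 : HasSum (fun n : ℕ => g (2 * (n + 1))) (Cs ^ 2 * (Real.pi ^ 2 / 6)) := by
      convert basel' using 2 with n
      have h2 : (2 * (n + 1) + 1) / 2 = n + 1 := by omega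
      simp [hg, h2]
    have := HasSum.zero_add (f := fun k : ℕ => g (2 * k)) h1
    simpa [hg] using this
  have hodd_sum : HasSum (fun k : ℕ => g (2 * k + 1)) (Cs ^ 2 * (Real.pi ^ 2 / 6)) := by
    convert basel' using 2 with n
    have h2 : (2 * n + 1 + 1) / 2 = n + 1 := by omega
    simp [hg, h2]
  have hgsum : HasSum g A := by
    have := heven_sum.even_add_odd hodd_sum
    convert this using 1
    rw [hA]; ring
  -- pointwise comparison
  have hdg : ∀ n, ‖d n‖ ^ 2 ≤ g n := by
    intro n
    rcases Nat.eq_zero_or_pos n with h | h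
    · subst h
      simpa [hg, hd] using pow_le_pow_left₀ (norm_nonneg _) h0 2
    · have hn0 : n ≠ 0 := h.ne'
      rcases Nat.even_or_odd n with ⟨k, hk⟩ | ⟨k, hk⟩
      · have hk1 : 1 ≤ k := by omega
        have hm : (n + 1) / 2 = k := by omega
        have := heven k hk1
        have hb : ‖d n‖ ≤ Cs / (k : ℝ) := by
          rw [hd]; simp only
          have : n = 2 * k := by omega
          rw [this]; exact heven k hk1
        simpa [hg, hn0, hm] using pow_le_pow_left₀ (norm_nonneg _) hb 2
      · have hk1 : 1 ≤ k + 1 := by omega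
        have hm : (n + 1) / 2 = k + 1 := by omega
        have hb : ‖d n‖ ≤ Cs / ((k + 1 : ℕ) : ℝ) := by
          rw [hd]; simp only
          have hn : n = 2 * (k + 1) - 1 := by omega
          rw [hn]; exact hodd (k + 1) hk1
        have := pow_le_pow_left₀ (norm_nonneg _) hb 2
        simpa [hg, hn0, hm] using this
  have sumd : Summable (fun n => ‖d n‖ ^ 2) :=
    Summable.of_nonneg_of_le (fun n => by positivity) hdg hgsum.summable
  have tsumd : ∑' n, ‖d n‖ ^ 2 ≤ A := by
    calc ∑' n, ‖d n‖ ^ 2 ≤ ∑' n, g n := Summable.tsum_le_tsum hdg sumd hgsum.summable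
      _ = A := hgsum.tsum_eq
  -- Parseval
  have hcs : ∀ v : H, HasSum (fun j : ℕ => ⟪(f j : H), v⟫ ^ 2) (‖v‖ ^ 2) := by
    intro v
    have := f.hasSum_inner_mul_inner v v
    convert this using 2 with j
    · rfl
    · rw [real_inner_comm]; ring
    · rw [real_inner_self_eq_norm_sq]
  -- summability of the defining series
  have hsum_norm : ∀ v : H, Summable (fun j : ℕ => ‖⟪(f j : H), v⟫ • d j‖) := by
    intro v
    apply Summable.of_nonneg_of_le (fun j => norm_nonneg _)
      (f := fun j => (⟪(f j : H), v⟫ ^ 2 + ‖d j‖ ^ 2) / 2)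
    · intro j
      rw [norm_smul, Real.norm_eq_abs]
      nlinarith [sq_nonneg (|⟪(f j : H), v⟫| - ‖d j‖), sq_abs ⟪(f j : H), v⟫,
        abs_nonneg ⟪(f j : H), v⟫, norm_nonneg (d j)]
    · exact ((hcs v).summable.add sumd).div_const 2
  have hsummable : ∀ v : H, Summable (fun j : ℕ => ⟪(f j : H), v⟫ • d j) :=
    fun v => (hsum_norm v).of_norm
  -- the key norm bound
  have hbound : ∀ v : H, ‖∑' j, ⟪(f j : H), v⟫ • d j‖ ≤ S * ‖v‖ := by
    intro v
    refine (norm_tsum_le_tsum_norm (hsum_norm v)).trans ?_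
    refine Summable.tsum_le_of_sum_le (hsum_norm v) ?_
    intro s
    have hCS : (∑ j ∈ s, |⟪(f j : H), v⟫| * ‖d j‖) ^ 2 ≤
        (∑ j ∈ s, ⟪(f j : H), v⟫ ^ 2) * (∑ j ∈ s, ‖d j‖ ^ 2) := by
      have := Finset.sum_mul_sq_le_sq_mul_sq s (fun j => |⟪(f j : H), v⟫|) (fun j => ‖d j‖)
      simpa [sq_abs] using this
    have h1 : ∑ j ∈ s, ⟪(f j : H), v⟫ ^ 2 ≤ ‖v‖ ^ 2 := by
      calc ∑ j ∈ s, ⟪(f j : H), v⟫ ^ 2 ≤ ∑' j, ⟪(f j : H), v⟫ ^ 2 :=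
            Summable.sum_le_tsum s (fun j _ => sq_nonneg _) (hcs v).summable
        _ = ‖v‖ ^ 2 := (hcs v).tsum_eq
    have h2 : ∑ j ∈ s, ‖d j‖ ^ 2 ≤ A := by
      calc ∑ j ∈ s, ‖d j‖ ^ 2 ≤ ∑' j, ‖d j‖ ^ 2 :=
            Summable.sum_le_tsum s (fun j _ => by positivity) sumd
        _ ≤ A := tsumd
    have hnn : 0 ≤ ∑ j ∈ s, |⟪(f j : H), v⟫| * ‖d j‖ :=
      Finset.sum_nonneg fun j _ => mul_nonneg (abs_nonneg _) (norm_nonneg _)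
    have key : ∑ j ∈ s, |⟪(f j : H), v⟫| * ‖d j‖ ≤ S * ‖v‖ := by
      have : (∑ j ∈ s, |⟪(f j : H), v⟫| * ‖d j‖) ^ 2 ≤ (S * ‖v‖) ^ 2 := by
        calc (∑ j ∈ s, |⟪(f j : H), v⟫| * ‖d j‖) ^ 2
            ≤ (∑ j ∈ s, ⟪(f j : H), v⟫ ^ 2) * (∑ j ∈ s, ‖d j‖ ^ 2) := hCS
          _ ≤ ‖v‖ ^ 2 * A := by
              apply mul_le_mul h1 h2 (Finset.sum_nonneg fun j _ => by positivity) (sq_nonneg _)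
          _ = (S * ‖v‖) ^ 2 := by
              rw [← hSA, mul_pow, Real.sq_sqrt (by positivity : (0:ℝ) ≤ A)]
              ring
      exact (pow_le_pow_iff_left₀ hnn (by positivity) (by norm_num)).mp this
    calc ∑ j ∈ s, ‖⟪(f j : H), v⟫ • d j‖ = ∑ j ∈ s, |⟪(f j : H), v⟫| * ‖d j‖ := by
            refine Finset.sum_congr rfl fun j _ => ?_
            rw [norm_smul, Real.norm_eq_abs]
        _ ≤ S * ‖v‖ := key
  -- the perturbation operator
  have hT : ∀ v : H, HasSum (fun j : ℕ => ⟪(f j : H), v⟫ • d j) (∑' j, ⟪(f j : H), v⟫ • d j) :=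
    fun v => (hsummable v).hasSum
  set T₀ : H →ₗ[ℝ] H :=
    { toFun := fun v => ∑' j, ⟪(f j : H), v⟫ • d j
      map_add' := by
        intro v w
        have h : HasSum (fun j : ℕ => ⟪(f j : H), v + w⟫ • d j)
            ((∑' j, ⟪(f j : H), v⟫ • d j) + ∑' j, ⟪(f j : H), w⟫ • d j) := by
          have := (hT v).add (hT w)
          convert this using 2 with j
          rw [inner_add_right, add_smul]
        exact h.tsum_eq
      map_smul' := by
        intro c v
        have h : HasSum (fun j : ℕ => ⟪(f j : H), c • v⟫ • d j)
            (c • ∑' j, ⟪(f j : H), v⟫ • d j) := by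
          have := (hT v).const_smul c
          convert this using 2 with j
          rw [real_inner_smul_right, smul_smul]
        exact h.tsum_eq } with hT₀
  have hT₀app : ∀ v : H, T₀ v = ∑' j, ⟪(f j : H), v⟫ • d j := fun v => rfl
  set T : H →L[ℝ] H := T₀.mkContinuous S (fun v => by rw [hT₀app]; exact hbound v) with hTdef
  have hTapp : ∀ v : H, T v = ∑' j, ⟪(f j : H), v⟫ • d j := fun v => rfl
  have hTnorm : ‖T‖ ≤ S :=
    T₀.mkContinuous_norm_le hS0 (fun v => by rw [hT₀app]; exact hbound v)
  refine ⟨ContinuousLinearMap.id ℝ H + T, ?_, ?_, ?_⟩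
  · intro v
    have hFv : HasSum (fun j : ℕ => ⟪(f j : H), v⟫ • (f j : H)) v := by
      have := f.hasSum_repr v
      convert this using 2 with j
      rw [f.repr_apply_apply]
    have := hFv.add (hT v)
    have h2 : HasSum (fun j : ℕ => ⟪(f j : H), v⟫ • e j)
        (v + ∑' j, ⟪(f j : H), v⟫ • d j) := by
      convert this using 2 with j
      rw [← smul_add, hd]
      simp
    simpa [hTapp] using h2
  · have : ContinuousLinearMap.id ℝ H + T - ContinuousLinearMap.id ℝ H = T := by
      ext v; simp
    rw [this]
    exact hTnorm
  · have hlt : ‖-T‖ < 1 := by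
      rw [norm_neg]
      exact lt_of_le_of_lt hTnorm hsmall
    refine ⟨ContinuousLinearEquiv.unitsEquiv ℝ H (Units.oneSub (-T) hlt), ?_⟩
    have : ((Units.oneSub (-T) hlt : (H →L[ℝ] H)ˣ) : H →L[ℝ] H) = 1 - -T := rfl
    ext v
    simp [ContinuousLinearEquiv.unitsEquiv, Units.oneSub, ContinuousLinearMap.one_def,
      ContinuousLinearEquiv.ofUnit]
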